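/- Let a, b, p, q be complex numbers with p ≠ 0, q ≠ 0 and p² − 4q ≠ 0, let r, t be integers with u_r ≠ 0, and let n be a non-negative integer. Then Σ_{j=0}^{n} q^{rj} w_{r(n−2j)+t} = w_t · Σ_{j=0}^{n} v_r^j v_{r(n−j)} / 2^{j+1}, and the common value of these two sums equals ( w_{t+1+r(n+1)} − q^{r(n+1)} w_{t+1−r(n+1)} − q·( w_{t−1+r(n+1)} − q^{r(n+1)} w_{t−1−r(n+1)} ) ) / (u_r·(p² − 4q)). -/

import Mathlib

open Finset

/-- Horadam sequence `w n (a,b;p,q)` for natural indices. -/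
def horadamAux (a b p q : ℂ) : ℕ → ℂ
  | 0 => a
  | 1 => b
  | n + 2 => p * horadamAux a b p q (n + 1) - q * horadamAux a b p q n

/-- Horadam sequence at negative indices: `horadamNegAux a b p q n = w (-n)`,
defined via the backward recurrence `w (n-2) = (p * w (n-1) - w n) / q`. -/
noncomputable def horadamNegAux (a b p q : ℂ) : ℕ → ℂ
  | 0 => a
  | 1 => (p * a - b) / q
  | n + 2 => (p * horadamNegAux a b p q (n + 1) - horadamNegAux a b p q n) / q

/-- Horadam sequence `w n (a,b;p,q)` for integer indices. -/
noncomputable def horadam (a b p q : ℂ) (n : ℤ) : ℂ :=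
  if 0 ≤ n then horadamAux a b p q n.toNat else horadamNegAux a b p q n.natAbs

lemma binetAux (a b c₁ c₂ α β : ℂ) (h0 : c₁ + c₂ = a) (h1 : c₁ * α + c₂ * β = b) :
    ∀ k : ℕ, horadamAux a b (α + β) (α * β) k = c₁ * α ^ k + c₂ * β ^ k := by
  have key : ∀ k : ℕ, horadamAux a b (α+β) (α*β) k = c₁*α^k + c₂*β^k ∧
      horadamAux a b (α+β) (α*β) (k+1) = c₁*α^(k+1) + c₂*β^(k+1) := by
    intro k
    induction k with
    | zero => exact ⟨by simpa [horadamAux] using h0.symm, by simpa [horadamAux] using h1.symm⟩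
    | succ k ih =>
      refine ⟨ih.2, ?_⟩
      show horadamAux a b (α+β) (α*β) (k+2) = _
      rw [horadamAux, ih.1, ih.2]; ring
  exact fun k => (key k).1

lemma binetNegAux (a b c₁ c₂ α β : ℂ) (hα : α ≠ 0) (hβ : β ≠ 0)
    (h0 : c₁ + c₂ = a) (h1 : c₁ * α + c₂ * β = b) :
    ∀ k : ℕ, horadamNegAux a b (α + β) (α * β) k = c₁ * α⁻¹ ^ k + c₂ * β⁻¹ ^ k := by
  have key : ∀ k : ℕ, horadamNegAux a b (α+β) (α*β) k = c₁*α⁻¹^k + c₂*β⁻¹^k ∧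
      horadamNegAux a b (α+β) (α*β) (k+1) = c₁*α⁻¹^(k+1) + c₂*β⁻¹^(k+1) := by
    intro k
    induction k with
    | zero =>
      constructor
      · simpa [horadamNegAux] using h0.symm
      · show horadamNegAux a b (α+β) (α*β) 1 = _
        rw [horadamNegAux]
        rw [div_eq_iff (by exact mul_ne_zero hα hβ)]
        have e : (c₁ * α⁻¹ ^ 1 + c₂ * β⁻¹ ^ 1) * (α * β) = c₁ * β + c₂ * α := by
          field_simp
        rw [e]
        linear_combination h1 - α*h0 - β*h0
    | succ k ih =>
      refine ⟨ih.2, ?_⟩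
      show horadamNegAux a b (α+β) (α*β) (k+2) = _
      rw [horadamNegAux, ih.1, ih.2]
      rw [div_eq_iff (mul_ne_zero hα hβ)]
      field_simp
      linear_combination (c₁ * α⁻¹ ^ k * (1 - β * α⁻¹)) * mul_inv_cancel₀ hα
        + (c₂ * β⁻¹ ^ k * (1 - α * β⁻¹)) * mul_inv_cancel₀ hβ
  exact fun k => (key k).1

lemma binet (a b c₁ c₂ α β : ℂ) (hα : α ≠ 0) (hβ : β ≠ 0)
    (h0 : c₁ + c₂ = a) (h1 : c₁ * α + c₂ * β = b) (n : ℤ) :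
    horadam a b (α + β) (α * β) n = c₁ * α ^ n + c₂ * β ^ n := by
  unfold horadam
  split_ifs with h
  · rw [binetAux a b c₁ c₂ α β h0 h1, ← zpow_natCast, ← zpow_natCast,
      Int.toNat_of_nonneg h]
  · rw [binetNegAux a b c₁ c₂ α β hα hβ h0 h1, inv_pow, inv_pow,
      ← zpow_natCast α, ← zpow_natCast β, ← zpow_neg, ← zpow_neg,
      show -((n.natAbs : ℕ) : ℤ) = n by omega]

lemma geom_div (x y : ℂ) (h : x ≠ y) (n : ℕ) :
    ∑ j ∈ range (n+1), x ^ j * y ^ (n - j) = (x ^ (n+1) - y ^ (n+1)) / (x - y) := by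
  rw [eq_div_iff (sub_ne_zero.2 h)]
  have := geom_sum₂_mul x y (n+1)
  simpa using this

lemma zpow_magic (α β : ℂ) (hα : α ≠ 0) (r t m j : ℤ) :
    (α * β) ^ (r * j) * α ^ (r * (m - 2 * j) + t)
      = α ^ t * (β ^ r) ^ j * (α ^ r) ^ (m - j) := by
  have h1 : α ^ (r * j) * α ^ (r * (m - 2 * j)) = α ^ (r * (m - j)) := by
    rw [← zpow_add₀ hα]; congr 1; ring
  rw [mul_zpow, zpow_add₀ hα, ← zpow_mul β, ← zpow_mul α r (m - j), ← h1]
  ring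

lemma sum_combine (s u : ℂ) (hsu : s ≠ u) (n : ℕ) :
    ∑ j ∈ range (n+1), (s + u) ^ j * (s ^ (n - j) + u ^ (n - j)) / 2 ^ (j+1)
      = ∑ j ∈ range (n+1), s ^ j * u ^ (n - j) := by
  have hWs : (s + u) / 2 ≠ s := fun h => hsu (by linear_combination -2*h)
  have hWu : (s + u) / 2 ≠ u := fun h => hsu (by linear_combination 2*h)
  have e1 := geom_div ((s+u)/2) s hWs n
  have e2 := geom_div ((s+u)/2) u hWu n
  have eG := geom_div s u hsu n
  have split : ∀ j ∈ range (n+1),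
      (s + u) ^ j * (s ^ (n - j) + u ^ (n - j)) / 2 ^ (j+1)
        = ((s+u)/2) ^ j * s ^ (n - j) / 2 + ((s+u)/2) ^ j * u ^ (n - j) / 2 := by
    intro j _
    rw [div_pow]
    field_simp
    ring
  rw [Finset.sum_congr rfl split, Finset.sum_add_distrib]
  have r1 : ∀ j ∈ range (n+1), ((s+u)/2) ^ j * s ^ (n-j) / 2 = (((s+u)/2) ^ j * s ^ (n-j)) * (1/2) := by
    intro j _; ring
  rw [Finset.sum_congr rfl r1, ← Finset.sum_mul, e1]
  have r2 : ∀ j ∈ range (n+1), ((s+u)/2) ^ j * u ^ (n-j) / 2 = (((s+u)/2) ^ j * u ^ (n-j)) * (1/2) := by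
    intro j _; ring
  rw [Finset.sum_congr rfl r2, ← Finset.sum_mul, e2, eG]
  have h1 : (s+u)/2 - s ≠ 0 := sub_ne_zero.2 hWs
  have h2 : (s+u)/2 - u ≠ 0 := sub_ne_zero.2 hWu
  have h3 : s - u ≠ 0 := sub_ne_zero.2 hsu
  have h4 : s + u - 2*s ≠ 0 := fun h => hsu (by linear_combination -h)
  have h5 : s + u - 2*u ≠ 0 := fun h => hsu (by linear_combination h)
  generalize ((s+u)/2) ^ (n+1) = P
  field_simp [h4, h5]
  have hJ : (-s+u)⁻¹ = -(s-u)⁻¹ := by rw [show -s+u = -(s-u) by ring, inv_neg]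
  linear_combination (P*s - P*u + s*s^n*u - s^2*s^n) * hJ
    + (s*s^n - u*u^n) * mul_inv_cancel₀ h3

lemma final_alg (A B aT bT α β S U s u : ℂ) (hα : α ≠ 0) (hβ : β ≠ 0)
    (hαβ : α - β ≠ 0) (hsu : s - u ≠ 0) (hS : S ≠ 0) (hU : U ≠ 0) :
    (A * aT + B * bT) * ((S - U) / (s - u)) =
    (A * (aT * α * S) + B * (bT * β * U) -
          S * U * (A * (aT * α / S) + B * (bT * β / U)) -
        α * β *
          (A * (aT / α * S) + B * (bT / β * U) -
            S * U * (A * (aT / α / S) + B * (bT / β / U)))) /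
      ((s - u) * (α - β)) := by
  have n1 : A * (aT * α * S) + B * (bT * β * U) -
      S * U * (A * (aT * α / S) + B * (bT * β / U)) = (S - U) * (A * aT * α - B * bT * β) := by
    field_simp; ring
  have n2 : A * (aT / α * S) + B * (bT / β * U) -
      S * U * (A * (aT / α / S) + B * (bT / β / U)) = (S - U) * (A * aT / α - B * bT / β) := by
    field_simp; ring
  rw [n1, n2, eq_div_iff (mul_ne_zero hsu hαβ)]
  field_simp
  ring

set_option maxHeartbeats 1000000 in
theorem horadam_thm1 (a b p q : ℂ) (hp : p ≠ 0) (hq : q ≠ 0) (hD : p ^ 2 - 4 * q ≠ 0)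
    (r t : ℤ) (hu : horadam 0 1 p q r ≠ 0) (n : ℕ) :
    (∑ j ∈ Finset.range (n + 1),
        q ^ (r * (j : ℤ)) * horadam a b p q (r * ((n : ℤ) - 2 * j) + t)
      = horadam a b p q t
          * ∑ j ∈ Finset.range (n + 1),
              horadam 2 p p q r ^ j * horadam 2 p p q (r * ((n : ℤ) - j)) / 2 ^ (j + 1)) ∧
    (∑ j ∈ Finset.range (n + 1),
        q ^ (r * (j : ℤ)) * horadam a b p q (r * ((n : ℤ) - 2 * j) + t)
      = (horadam a b p q (t + 1 + r * ((n : ℤ) + 1))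
          - q ^ (r * ((n : ℤ) + 1)) * horadam a b p q (t + 1 - r * ((n : ℤ) + 1))
          - q * (horadam a b p q (t - 1 + r * ((n : ℤ) + 1))
            - q ^ (r * ((n : ℤ) + 1)) * horadam a b p q (t - 1 - r * ((n : ℤ) + 1))))
        / (horadam 0 1 p q r * (p ^ 2 - 4 * q))) := by
  obtain ⟨d, hd⟩ : ∃ d : ℂ, d ^ 2 = p ^ 2 - 4 * q :=
    IsAlgClosed.exists_pow_nat_eq _ (by norm_num : (0:ℕ) < 2)
  have hd0 : d ≠ 0 := fun h => hD (by rw [← hd, h]; ring)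
  obtain ⟨α, β, hsum, hprod, hsub⟩ : ∃ α β : ℂ, α + β = p ∧ α * β = q ∧ α - β = d :=
    ⟨(p+d)/2, (p-d)/2, by ring, by linear_combination (-(1:ℂ)/4) * hd, by ring⟩
  have hα0 : α ≠ 0 := fun h => hq (by rw [← hprod, h, zero_mul])
  have hβ0 : β ≠ 0 := fun h => hq (by rw [← hprod, h, mul_zero])
  have hw : ∀ m : ℤ, horadam a b p q m
      = ((b - a*β)/d) * α ^ m + ((a*α - b)/d) * β ^ m := by
    intro m
    rw [← hsum, ← hprod]
    refine binet a b _ _ α β hα0 hβ0 ?_ ?_ m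
    · field_simp; linear_combination a * hsub
    · field_simp; linear_combination b * hsub
  have hu_b : ∀ m : ℤ, horadam 0 1 p q m = (1/d) * α ^ m + (-1/d) * β ^ m := by
    intro m
    rw [← hsum, ← hprod]
    refine binet 0 1 _ _ α β hα0 hβ0 (by ring) ?_ m
    field_simp; linear_combination hsub
  have hv : ∀ m : ℤ, horadam 2 p p q m = α ^ m + β ^ m := by
    intro m
    rw [← hsum, ← hprod]
    simpa using binet 2 (α+β) 1 1 α β hα0 hβ0 (by norm_num) (by ring) m
  have hs0 : α ^ r ≠ 0 := zpow_ne_zero r hα0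
  have hus0 : β ^ r ≠ 0 := zpow_ne_zero r hβ0
  have hsune : α ^ r ≠ β ^ r := by
    intro h
    apply hu
    rw [hu_b r, h]; ring
  have hsub0 : α ^ r - β ^ r ≠ 0 := sub_ne_zero.2 hsune
  -- step 1 : the left-hand sum equals w_t * G
  have key1 : ∀ j ∈ range (n+1),
      q ^ (r * (j:ℤ)) * horadam a b p q (r * ((n:ℤ) - 2*(j:ℤ)) + t)
        = ((b - a*β)/d) * α ^ t * ((β^r)^j * (α^r)^(n-j))
          + ((a*α - b)/d) * β ^ t * ((α^r)^j * (β^r)^(n-j)) := by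
    intro j hj
    have hjn : (n:ℤ) - (j:ℤ) = ((n - j : ℕ) : ℤ) := by
      have := mem_range.1 hj; omega
    have e1 : (α*β) ^ (r*(j:ℤ)) * α ^ (r*((n:ℤ)-2*(j:ℤ))+t)
        = α^t * (β^r)^j * (α^r)^(n-j) := by
      rw [zpow_magic α β hα0 r t (n:ℤ) j, hjn, zpow_natCast, zpow_natCast]
    have e2 : (α*β) ^ (r*(j:ℤ)) * β ^ (r*((n:ℤ)-2*(j:ℤ))+t)
        = β^t * (α^r)^j * (β^r)^(n-j) := by
      rw [mul_comm α β, zpow_magic β α hβ0 r t (n:ℤ) j, hjn, zpow_natCast, zpow_natCast]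
    rw [hw, ← hprod]
    linear_combination ((b - a*β)/d) * e1 + ((a*α - b)/d) * e2
  have hGsum : ∑ j ∈ range (n+1), (β^r)^j * (α^r)^(n-j)
      = ∑ j ∈ range (n+1), (α^r)^j * (β^r)^(n-j) := by
    rw [geom_div _ _ hsune.symm n, geom_div _ _ hsune n,
      div_eq_div_iff (sub_ne_zero.2 hsune.symm) hsub0]
    ring
  have hL : ∑ j ∈ range (n + 1),
        q ^ (r * (j : ℤ)) * horadam a b p q (r * ((n : ℤ) - 2 * j) + t)
      = horadam a b p q t * ∑ j ∈ range (n+1), (α^r)^j * (β^r)^(n-j) := by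
    rw [Finset.sum_congr rfl key1, Finset.sum_add_distrib, ← Finset.mul_sum,
      ← Finset.mul_sum, hGsum, hw t, Finset.mul_sum, Finset.mul_sum, Finset.mul_sum,
      ← Finset.sum_add_distrib]
    exact Finset.sum_congr rfl fun j _ => by ring
  constructor
  · -- conjunct 1
    rw [hL]
    congr 1
    have key2 : ∀ j ∈ range (n+1),
        horadam 2 p p q r ^ j * horadam 2 p p q (r*((n:ℤ)-(j:ℤ))) / 2^(j+1)
          = (α^r + β^r)^j * ((α^r)^(n-j) + (β^r)^(n-j)) / 2^(j+1) := by
      intro j hj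
      have hjn : (n:ℤ) - (j:ℤ) = ((n - j : ℕ) : ℤ) := by
        have := mem_range.1 hj; omega
      rw [hv, hv, zpow_mul α, zpow_mul β, hjn, zpow_natCast, zpow_natCast]
    rw [Finset.sum_congr rfl key2, sum_combine _ _ hsune n]
  · -- conjunct 2
    rw [hL]
    have hden : horadam 0 1 p q r * (p^2 - 4*q) = (α^r - β^r) * d := by
      rw [hu_b r, ← hd]
      field_simp
      ring
    have hN1 : ((n:ℤ)+1) = ((n+1:ℕ):ℤ) := by push_cast; ring
    have pe : ∀ x : ℂ, x ≠ 0 → ∀ e : ℤ, x ^ (e + r*((n:ℤ)+1)) = x^e * (x^r)^(n+1) := by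
      intro x hx e
      rw [zpow_add₀ hx, zpow_mul, hN1, zpow_natCast]
    have pe' : ∀ x : ℂ, x ≠ 0 → ∀ e : ℤ, x ^ (e - r*((n:ℤ)+1)) = x^e / (x^r)^(n+1) := by
      intro x hx e
      rw [zpow_sub₀ hx, zpow_mul, hN1, zpow_natCast]
    have pq : q ^ (r*((n:ℤ)+1)) = (α^r)^(n+1) * (β^r)^(n+1) := by
      rw [← hprod, mul_zpow, zpow_mul, zpow_mul, hN1, zpow_natCast, zpow_natCast]
    have zt1 : ∀ x : ℂ, x ≠ 0 → x^(t+1) = x^t * x := by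
      intro x hx; rw [zpow_add₀ hx, zpow_one]
    have zt2 : ∀ x : ℂ, x ≠ 0 → x^(t-1) = x^t / x := by
      intro x hx; rw [zpow_sub₀ hx, zpow_one]
    have hS0 : (α^r)^(n+1) ≠ 0 := pow_ne_zero _ hs0
    have hU0 : (β^r)^(n+1) ≠ 0 := pow_ne_zero _ hus0
    rw [hden, geom_div _ _ hsune n]
    rw [hw t, hw (t+1+r*((n:ℤ)+1)), hw (t+1-r*((n:ℤ)+1)), hw (t-1+r*((n:ℤ)+1)),
      hw (t-1-r*((n:ℤ)+1)), pq,
      pe α hα0 (t+1), pe β hβ0 (t+1), pe' α hα0 (t+1), pe' β hβ0 (t+1),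
      pe α hα0 (t-1), pe β hβ0 (t-1), pe' α hα0 (t-1), pe' β hβ0 (t-1),
      zt1 α hα0, zt1 β hβ0, zt2 α hα0, zt2 β hβ0, ← hprod, ← hsub]
    have hαβ0 : α - β ≠ 0 := by rw [hsub]; exact hd0
    exact final_alg ((b - a*β)/(α-β)) ((a*α - b)/(α-β)) (α^t) (β^t) α β
      ((α^r)^(n+1)) ((β^r)^(n+1)) (α^r) (β^r) hα0 hβ0 hαβ0 hsub0 hS0 hU0
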